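/- Let P^s_l(z, T₁, T₂, T₄) be the polynomials over ℚ in variables z, T₁, T₂, T₄ defined recursively by P^0_l = 1 and P^{s+1}_l = P^1_{l+s} · P^s_l − (z · (1/4) ∂²/∂z² + (l + s − 1/2) · (1/2) ∂/∂z) P^s_l, where P^1_m(z, T₁, T₂, T₄) = z(T₁T₄ − T₂²) − (m − 1/2) T₂. Then for every s, the evaluation b^s_l(T₁, T₂, T₄) := P^s_l(0, T₁, T₂, T₄) is a homogeneous polynomial of degree s in T₁, T₂, T₄. -/

import Mathlib

open Polynomial

/-- `P¹_m(z,T₁,T₂,T₄) = z·(T₁T₄ − T₂²) − (m − 1/2)·T₂`, a polynomial in `z` with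
coefficients in `ℚ[T₁,T₂,T₄]` (the variables `T₁,T₂,T₄` are `X 0, X 1, X 2`). -/
noncomputable def P1 (m : ℚ) : Polynomial (MvPolynomial (Fin 3) ℚ) :=
  Polynomial.X * Polynomial.C (MvPolynomial.X 0 * MvPolynomial.X 2 - MvPolynomial.X 1 ^ 2) -
    Polynomial.C (MvPolynomial.C (m - 1 / 2) * MvPolynomial.X 1)

/-- The Böcherer–Schmidt polynomials `P^s_l`, defined recursively by `P^0_l = 1` and
`P^{s+1}_l = P¹_{l+s} · P^s_l − (z·(1/4)·∂²_z + (l + s − 1/2)·(1/2)·∂_z) P^s_l`. -/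
noncomputable def Ppol (l : ℚ) : ℕ → Polynomial (MvPolynomial (Fin 3) ℚ)
  | 0 => 1
  | s + 1 =>
      P1 (l + s) * Ppol l s -
        (((1 : ℚ) / 4) • (Polynomial.X * Polynomial.derivative (Polynomial.derivative (Ppol l s))) +
          ((l + (s : ℚ) - 1 / 2) / 2) • Polynomial.derivative (Ppol l s))

/-- `b^s_l(T₁,T₂,T₄) = P^s_l(0,T₁,T₂,T₄)`. -/
noncomputable def bpol (l : ℚ) (s : ℕ) : MvPolynomial (Fin 3) ℚ := (Ppol l s).eval 0

lemma smul_hom (q : ℚ) {p : MvPolynomial (Fin 3) ℚ} {n : ℕ} (h : p.IsHomogeneous n) :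
    (q • p).IsHomogeneous n := by
  rw [MvPolynomial.smul_eq_C_mul]
  simpa using (MvPolynomial.isHomogeneous_C (Fin 3) q).mul h

lemma natCast_hom (n : ℕ) : ((n : MvPolynomial (Fin 3) ℚ)).IsHomogeneous 0 := by
  rw [← MvPolynomial.C_eq_coe_nat]
  exact MvPolynomial.isHomogeneous_C _ _

lemma natCast1_hom (n : ℕ) : ((n : MvPolynomial (Fin 3) ℚ) + 1).IsHomogeneous 0 := by
  rw [show ((n : MvPolynomial (Fin 3) ℚ) + 1) = ((n + 1 : ℕ) : MvPolynomial (Fin 3) ℚ) by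
    push_cast; ring]
  exact natCast_hom _

lemma P1_coeff_hom (m : ℚ) (k : ℕ) : ((P1 m).coeff k).IsHomogeneous (k + 1) := by
  have h2 : (MvPolynomial.X 0 * MvPolynomial.X 2 -
      MvPolynomial.X (1 : Fin 3) ^ 2 : MvPolynomial (Fin 3) ℚ).IsHomogeneous 2 := by
    apply MvPolynomial.IsHomogeneous.sub
    · exact (MvPolynomial.isHomogeneous_X _ _).mul (MvPolynomial.isHomogeneous_X _ _)
    · exact (MvPolynomial.isHomogeneous_X _ _).pow 2
  have h1 : (MvPolynomial.C (m - 1/2) *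
      MvPolynomial.X (1 : Fin 3) : MvPolynomial (Fin 3) ℚ).IsHomogeneous 1 :=
    (MvPolynomial.isHomogeneous_C _ _).mul (MvPolynomial.isHomogeneous_X _ _)
  rw [P1]
  match k with
  | 0 =>
    rw [Polynomial.coeff_sub, Polynomial.mul_coeff_zero, Polynomial.coeff_X_zero, zero_mul,
      Polynomial.coeff_C_zero, zero_sub]
    exact h1.neg
  | 1 =>
    rw [Polynomial.coeff_sub, Polynomial.coeff_X_mul, Polynomial.coeff_C_zero,
      Polynomial.coeff_C]
    simp only [one_ne_zero, if_false, sub_zero]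
    exact h2
  | (n + 2) =>
    rw [Polynomial.coeff_sub, Polynomial.coeff_X_mul, Polynomial.coeff_C, Polynomial.coeff_C]
    simp only [Nat.succ_ne_zero, if_false, sub_zero]
    exact MvPolynomial.isHomogeneous_zero _ _ _

lemma Ppol_coeff_hom (l : ℚ) (s k : ℕ) : ((Ppol l s).coeff k).IsHomogeneous (s + k) := by
  induction s generalizing k with
  | zero =>
    match k with
    | 0 =>
      simp only [Ppol, Polynomial.coeff_one, if_pos rfl]
      exact MvPolynomial.isHomogeneous_one _ _
    | n + 1 =>
      simp only [Ppol, Polynomial.coeff_one, Nat.succ_ne_zero, if_false]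
      exact MvPolynomial.isHomogeneous_zero _ _ _
  | succ s ih =>
    rw [Ppol, Polynomial.coeff_sub, Polynomial.coeff_add, Polynomial.coeff_smul,
      Polynomial.coeff_smul]
    apply MvPolynomial.IsHomogeneous.sub
    · rw [Polynomial.coeff_mul]
      apply MvPolynomial.IsHomogeneous.sum
      rintro ⟨i, j⟩ hij
      rw [Finset.HasAntidiagonal.mem_antidiagonal] at hij
      have h := (P1_coeff_hom (l + s) i).mul (ih j)
      have hd : i + 1 + (s + j) = s + 1 + k := by omega
      exact hd ▸ h
    · apply MvPolynomial.IsHomogeneous.add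
      · apply smul_hom
        match k with
        | 0 =>
          rw [Polynomial.mul_coeff_zero, Polynomial.coeff_X_zero, zero_mul]
          exact MvPolynomial.isHomogeneous_zero _ _ _
        | n + 1 =>
          rw [Polynomial.coeff_X_mul, Polynomial.coeff_derivative, Polynomial.coeff_derivative]
          have h := ((ih (n + 2)).mul (natCast1_hom (n + 1))).mul (natCast1_hom n)
          have hd : s + (n + 2) + 0 + 0 = s + 1 + (n + 1) := by omega
          exact hd ▸ h
      · apply smul_hom
        rw [Polynomial.coeff_derivative]
        have h := (ih (k + 1)).mul (natCast1_hom k)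
        have hd : s + (k + 1) + 0 = s + 1 + k := by omega
        exact hd ▸ h

/-- `b^s_l := P^s_l(0, T₁, T₂, T₄)` is a homogeneous polynomial of degree `s`
in `T₁, T₂, T₄`. -/
theorem stmt2 (l : ℚ) (s : ℕ) : (bpol l s).IsHomogeneous s := by
  have := Ppol_coeff_hom l s 0
  rw [bpol, ← Polynomial.coeff_zero_eq_eval_zero]
  simpa using this
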